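/- arXiv:2112.02427 — 3 statements merged into one kernel-verified Lean document; each statement's English description precedes it below -/
import Mathlib

section
/- (Claim A of the lower bound) Suppose a sequence of queries Q_1,…,Q_t over universe N solves Group Testing under any feedback capped at α, meaning any two distinct subsets of N of size at most k yield different feedback vectors, where feedback on query Q for hidden set K depends only on Q ∩ K and takes a single fixed value whenever |Q ∩ K| > α. Then for every set K with |K| ≤ k and every x ∈ K there exists an index τ with x ∈ Q_τ and |K ∩ Q_τ| ≤ α + 1. -/
open scoped Classical in
/-- Claim A of the lower bound: under any feedback capped at `α`, every element of
any hidden set `K` of size at most `k` belongs to some query intersecting `K` in at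
most `α + 1` elements. -/
theorem claimA_lower_bound
    {N : Type*} [Fintype N] [DecidableEq N] {β : Type*}
    (t k α : ℕ) (hk : 0 < k)
    (Q : Fin t → Finset N)
    (F : Finset N → β) (v : β)
    (hcap : ∀ S : Finset N, α < S.card → F S = v)
    (hsolves : ∀ K1 K2 : Finset N, K1.card ≤ k → K2.card ≤ k →
      (∀ i : Fin t, F (Q i ∩ K1) = F (Q i ∩ K2)) → K1 = K2) :
    ∀ K : Finset N, K.card ≤ k → ∀ x ∈ K,
      ∃ τ : Fin t, x ∈ Q τ ∧ (K ∩ Q τ).card ≤ α + 1 := by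
  intro K hK x hx
  by_contra hcon
  push_neg at hcon
  have heq : K = K.erase x := by
    apply hsolves K (K.erase x) hK ((Finset.card_erase_le.trans hK))
    intro i
    by_cases hxQ : x ∈ Q i
    · have hbig : α + 2 ≤ (K ∩ Q i).card := hcon i hxQ
      have h1 : F (Q i ∩ K) = v := by
        apply hcap
        have : (K ∩ Q i).card = (Q i ∩ K).card := by rw [Finset.inter_comm]
        omega
      have h2 : F (Q i ∩ K.erase x) = v := by
        apply hcap
        have he : Q i ∩ K.erase x = (Q i ∩ K).erase x := by
          ext y; simp [Finset.mem_erase]; tauto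
        rw [he, Finset.card_erase_of_mem (by simp [hxQ, hx])]
        have : (K ∩ Q i).card = (Q i ∩ K).card := by rw [Finset.inter_comm]
        omega
      rw [h1, h2]
    · congr 1
      ext y; simp only [Finset.mem_inter, Finset.mem_erase]
      constructor
      · rintro ⟨hy, hyK⟩
        exact ⟨hy, fun h => hxQ (h ▸ hy), hyK⟩
      · rintro ⟨hy, _, hyK⟩; exact ⟨hy, hyK⟩
  have := Finset.notMem_erase x K
  rw [← heq] at this
  exact this hx
end

section
/- (Balanced IDs decoding) For any element v of [n], define its balanced ID as the binary vector of length 2·log₂ n obtained by concatenating the binary representations of v and n−v (each in log₂ n bits); then the balanced ID has exactly log₂ n ones. Moreover, the sum (coordinatewise over ℤ) of two or more distinct balanced IDs either contains an entry ≥ 2 or has more than log₂ n ones; hence no such sum equals any single balanced ID. -/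
/-- The balanced ID of `v ∈ {0,…,2^m−1}`: a 0/1-vector of length `2m`, the
concatenation of the `m`-bit binary representations of `v` and of `2^m − 1 − v`. -/
def balancedID (m v : ℕ) : Fin (2 * m) → ℕ :=
  fun i => if (i : ℕ) < m then (v.testBit i).toNat
           else ((2 ^ m - 1 - v).testBit ((i : ℕ) - m)).toNat

lemma balancedID_le_one (m v : ℕ) (i : Fin (2 * m)) : balancedID m v i ≤ 1 := by
  unfold balancedID
  split <;> exact Bool.toNat_le _

lemma testBit_compl {m v i : ℕ} (hv : v < 2 ^ m) (hi : i < m) :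
    (2 ^ m - 1 - v).testBit i = !v.testBit i := by
  have h : 2 ^ m - 1 - v = 2 ^ m - (v + 1) := by omega
  rw [h, Nat.testBit_two_pow_sub_succ hv]
  simp [hi]

lemma sum_balancedID (m v : ℕ) (hv : v < 2 ^ m) :
    ∑ i : Fin (2 * m), balancedID m v i = m := by
  have h0 : ∑ i : Fin (2 * m), balancedID m v i =
      ∑ i ∈ Finset.range (2 * m),
        (fun j => if j < m then (v.testBit j).toNat
          else ((2 ^ m - 1 - v).testBit (j - m)).toNat) i := by
    exact Fin.sum_univ_eq_sum_range (fun j => if j < m then (v.testBit j).toNat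
      else ((2 ^ m - 1 - v).testBit (j - m)).toNat) (2 * m)
  rw [h0, two_mul, Finset.sum_range_add]
  have h1 : ∀ j ∈ Finset.range m,
      (if j < m then (v.testBit j).toNat
        else ((2 ^ m - 1 - v).testBit (j - m)).toNat) = (v.testBit j).toNat := by
    intro j hj
    rw [Finset.mem_range] at hj
    simp [hj]
  have h2 : ∀ j ∈ Finset.range m,
      (if m + j < m then (v.testBit (m + j)).toNat
        else ((2 ^ m - 1 - v).testBit (m + j - m)).toNat) = (!v.testBit j).toNat := by
    intro j hj
    rw [Finset.mem_range] at hj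
    rw [if_neg (by omega), Nat.add_sub_cancel_left, testBit_compl hv hj]
  rw [Finset.sum_congr rfl h1, Finset.sum_congr rfl h2, ← Finset.sum_add_distrib]
  have h3 : ∀ j ∈ Finset.range m, (v.testBit j).toNat + (!v.testBit j).toNat = 1 := by
    intro j _
    cases v.testBit j <;> rfl
  rw [Finset.sum_congr rfl h3, Finset.sum_const, Finset.card_range, smul_eq_mul, mul_one]

lemma card_ones (m v : ℕ) (hv : v < 2 ^ m)
    [DecidablePred fun i : Fin (2 * m) => balancedID m v i = 1] :
    (Finset.univ.filter (fun i : Fin (2 * m) => balancedID m v i = 1)).card = m := by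
  rw [Finset.card_filter]
  have h : ∀ i ∈ (Finset.univ : Finset (Fin (2 * m))),
      (if balancedID m v i = 1 then 1 else 0) = balancedID m v i := by
    intro i _
    have := balancedID_le_one m v i
    split <;> omega
  rw [Finset.sum_congr rfl h, sum_balancedID m v hv]

open scoped Classical in
/-- Balanced IDs have exactly `m` ones, and the coordinatewise sum of two or more
distinct balanced IDs either has an entry `≥ 2` or has more than `m` nonzero
coordinates; hence no such sum equals any single balanced ID. -/
theorem balancedID_decoding (m : ℕ) (hm : 0 < m) :
    (∀ v < 2 ^ m,
      (Finset.univ.filter (fun i : Fin (2 * m) => balancedID m v i = 1)).card = m) ∧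
    (∀ S : Finset ℕ, (∀ v ∈ S, v < 2 ^ m) → 2 ≤ S.card →
      ((∃ i : Fin (2 * m), 2 ≤ ∑ v ∈ S, balancedID m v i) ∨
        m < (Finset.univ.filter
          (fun i : Fin (2 * m) => 1 ≤ ∑ v ∈ S, balancedID m v i)).card) ∧
      (∀ w < 2 ^ m, (fun i => ∑ v ∈ S, balancedID m v i) ≠ balancedID m w)) := by
  constructor
  · intro v hv
    exact card_ones m v hv
  · intro S hS hcard
    have hsum : ∑ i : Fin (2 * m), ∑ v ∈ S, balancedID m v i = m * S.card := by
      rw [Finset.sum_comm]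
      rw [Finset.sum_congr rfl (fun v hv => sum_balancedID m v (hS v hv))]
      rw [Finset.sum_const, smul_eq_mul, mul_comm]
    have key : (∀ i : Fin (2 * m), (∑ v ∈ S, balancedID m v i) ≤ 1) →
        m < (Finset.univ.filter
          (fun i : Fin (2 * m) => 1 ≤ ∑ v ∈ S, balancedID m v i)).card := by
      intro h1
      have hc : (Finset.univ.filter
          (fun i : Fin (2 * m) => 1 ≤ ∑ v ∈ S, balancedID m v i)).card
          = ∑ i : Fin (2 * m), ∑ v ∈ S, balancedID m v i := by
        rw [Finset.card_filter]
        refine Finset.sum_congr rfl fun i _ => ?_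
        have := h1 i
        split <;> omega
      rw [hc, hsum]
      calc m < m * 2 := by omega
        _ ≤ m * S.card := Nat.mul_le_mul_left m hcard
    constructor
    · by_cases h : ∃ i : Fin (2 * m), 2 ≤ ∑ v ∈ S, balancedID m v i
      · exact Or.inl h
      · push_neg at h
        exact Or.inr (key fun i => by have := h i; omega)
    · intro w hw hEq
      have h1 : ∀ i : Fin (2 * m), (∑ v ∈ S, balancedID m v i) ≤ 1 := by
        intro i
        have := congrFun hEq i
        rw [this]
        exact balancedID_le_one m w i
      have h2 := key h1
      have h3 : (Finset.univ.filter
          (fun i : Fin (2 * m) => 1 ≤ ∑ v ∈ S, balancedID m v i)).card = m := by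
        rw [Finset.filter_congr (q := fun i : Fin (2 * m) => balancedID m w i = 1)
          (fun i _ => by
            have he := congrFun hEq i
            have := balancedID_le_one m w i
            constructor
            · intro hge; omega
            · intro heq; omega)]
        exact card_ones m w hw
      omega
end

section
/- (Symmetric-difference reduction) Suppose every nonempty set S ⊆ N with |S| ≤ 2k admits a query Q in the sequence with |Q ∩ S| = 1 and |Q| ≤ α. Then for any two distinct sets K1, K2 ⊆ N with |K1|, |K2| ≤ k, the feedback vectors under F_α(X) = min(|X|, α) differ, i.e., there is a query Q with min(|Q ∩ K1|, α) ≠ min(|Q ∩ K2|, α). -/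
open scoped symmDiff in
lemma card_symmDiff_aux {N : Type*} [DecidableEq N] (A B : Finset N) :
    (A ∆ B).card + 2 * (A ∩ B).card = A.card + B.card := by
  rw [symmDiff_def, Finset.sup_eq_union, Finset.card_union_of_disjoint disjoint_sdiff_sdiff]
  have h1 := Finset.card_sdiff_add_card_inter A B
  have h2 := Finset.card_sdiff_add_card_inter B A
  rw [Finset.inter_comm] at h2
  omega

open scoped Classical in
/-- Symmetric-difference reduction: if every nonempty set of size at most `2k` is
hit exactly once by some query of size at most `α`, then the capped feedback
vectors of any two distinct sets of size at most `k` differ. -/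
theorem symmDiff_reduction
    {N : Type*} [Fintype N] [DecidableEq N]
    (t k α : ℕ)
    (Q : Fin t → Finset N)
    (hhit : ∀ S : Finset N, S ≠ ∅ → S.card ≤ 2 * k →
      ∃ i : Fin t, (Q i ∩ S).card = 1 ∧ (Q i).card ≤ α) :
    ∀ K1 K2 : Finset N, K1.card ≤ k → K2.card ≤ k → K1 ≠ K2 →
      ∃ i : Fin t, min (Q i ∩ K1).card α ≠ min (Q i ∩ K2).card α := by
  open scoped symmDiff in
  intro K1 K2 h1 h2 hne
  have hSne : K1 ∆ K2 ≠ ∅ := by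
    intro h
    exact hne (by simpa [symmDiff_eq_bot, Finset.bot_eq_empty] using h)
  have hScard : (K1 ∆ K2).card ≤ 2 * k := by
    have := card_symmDiff_aux K1 K2
    omega
  obtain ⟨i, hcard, hα⟩ := hhit _ hSne hScard
  refine ⟨i, ?_⟩
  have hd : Q i ∩ (K1 ∆ K2) = (Q i ∩ K1) ∆ (Q i ∩ K2) :=
    inf_symmDiff_distrib_left _ _ _
  have hkey := card_symmDiff_aux (Q i ∩ K1) (Q i ∩ K2)
  rw [← hd, hcard] at hkey
  have hb1 : (Q i ∩ K1).card ≤ α :=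
    le_trans (Finset.card_le_card (Finset.inter_subset_left)) hα
  have hb2 : (Q i ∩ K2).card ≤ α :=
    le_trans (Finset.card_le_card (Finset.inter_subset_left)) hα
  rw [min_eq_left hb1, min_eq_left hb2]
  omega
end
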